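/- Let P : ℝ² → ℝ be a polynomial function and (α, β) ∈ ℝ² with P(α, β) = 0, ∂P/∂y(α, β) = 0 and ∂P/∂x(α, β) ≠ 0. Let Φ : ℝ → ℝ be a function twice differentiable at β with Φ(β) = α and P(Φ(y), y) = 0 for all y in some neighborhood of β. Then Φ″(β)·∂P/∂x(α, β) = −∂²P/∂y²(α, β); in particular Φ″(β) = −(∂²P/∂y²(α, β))/(∂P/∂x(α, β)). -/

import Mathlib

open MvPolynomial

lemma eval_chain (f : ℝ → ℝ) (y f' : ℝ) (hf : HasDerivAt f f' y)
    (p : MvPolynomial (Fin 2) ℝ) :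
    HasDerivAt (fun t => eval ![f t, t] p)
      (eval ![f y, y] (pderiv 0 p) * f' + eval ![f y, y] (pderiv 1 p)) y := by
  induction p using MvPolynomial.induction_on with
  | C a => simpa using hasDerivAt_const y (a : ℝ)
  | add p q hp hq =>
      have this : HasDerivAt (fun t => eval ![f t, t] p + eval ![f t, t] q) _ y := hp.add hq
      simp only [eval_add, map_add] at this ⊢
      convert this using 1
      ring
  | mul_X p n hp =>
      fin_cases n
      · have this : HasDerivAt (fun t => eval ![f t, t] p * f t) _ y := hp.mul hf
        simp only [eval_mul, eval_X, map_mul, pderiv_mul, pderiv_X, eval_add,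
          Matrix.cons_val_zero, Matrix.cons_val_one, Matrix.head_cons] at this ⊢
        convert this using 1
        all_goals simp [Pi.single_apply, Fin.zero_eta, Fin.mk_one]
        ring
      · have this : HasDerivAt (fun t => eval ![f t, t] p * id t) _ y := hp.mul (hasDerivAt_id y)
        simp only [eval_mul, eval_X, map_mul, pderiv_mul, pderiv_X, eval_add,
          Matrix.cons_val_zero, Matrix.cons_val_one, Matrix.head_cons, id] at this ⊢
        convert this using 1
        all_goals simp [Pi.single_apply, Fin.zero_eta, Fin.mk_one]
        ring

theorem ramification_point_second_derivative (p : MvPolynomial (Fin 2) ℝ) (α β : ℝ)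
    (h0 : eval ![α, β] p = 0)
    (hy : eval ![α, β] (pderiv 1 p) = 0)
    (hx : eval ![α, β] (pderiv 0 p) ≠ 0)
    (Φ : ℝ → ℝ)
    (hΦ : ∀ᶠ y in nhds β, DifferentiableAt ℝ Φ y)
    (hΦ2 : DifferentiableAt ℝ (deriv Φ) β)
    (hΦβ : Φ β = α)
    (hloc : ∀ᶠ y in nhds β, eval ![Φ y, y] p = 0) :
    deriv (deriv Φ) β * eval ![α, β] (pderiv 0 p) =
        -(eval ![α, β] (pderiv 1 (pderiv 1 p))) ∧
      deriv (deriv Φ) β =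
        -(eval ![α, β] (pderiv 1 (pderiv 1 p))) / eval ![α, β] (pderiv 0 p) := by
  set G : ℝ → ℝ := fun y =>
    eval ![Φ y, y] (pderiv 0 p) * deriv Φ y + eval ![Φ y, y] (pderiv 1 p) with hGdef
  -- G = 0 eventually
  have hG0 : ∀ᶠ y in nhds β, G y = 0 := by
    filter_upwards [hΦ, hloc.eventually_nhds] with y hy1 hy2
    have hF0 : HasDerivAt (fun t => eval ![Φ t, t] p) 0 y :=
      (hasDerivAt_const y (0:ℝ)).congr_of_eventuallyEq (by filter_upwards [hy2] with z hz using hz)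
    have hF : HasDerivAt (fun t => eval ![Φ t, t] p) (G y) y :=
      eval_chain Φ y (deriv Φ y) hy1.hasDerivAt p
    exact hF.unique hF0
  have hGβ : G β = 0 := hG0.self_of_nhds
  have hΦ'β : deriv Φ β = 0 := by
    rw [hGdef] at hGβ
    simp only [hΦβ, hy, add_zero] at hGβ
    exact (mul_eq_zero.mp hGβ).resolve_left hx
  -- second derivative
  have hΦd : HasDerivAt Φ (deriv Φ β) β := (hΦ.self_of_nhds).hasDerivAt
  have he0 : HasDerivAt (fun t => eval ![Φ t, t] (pderiv 0 p))
      (eval ![Φ β, β] (pderiv 0 (pderiv 0 p)) * deriv Φ β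
        + eval ![Φ β, β] (pderiv 1 (pderiv 0 p))) β :=
    eval_chain Φ β (deriv Φ β) hΦd (pderiv 0 p)
  have he1 : HasDerivAt (fun t => eval ![Φ t, t] (pderiv 1 p))
      (eval ![Φ β, β] (pderiv 0 (pderiv 1 p)) * deriv Φ β
        + eval ![Φ β, β] (pderiv 1 (pderiv 1 p))) β :=
    eval_chain Φ β (deriv Φ β) hΦd (pderiv 1 p)
  have hGd : HasDerivAt G
      ((eval ![Φ β, β] (pderiv 0 (pderiv 0 p)) * deriv Φ β
          + eval ![Φ β, β] (pderiv 1 (pderiv 0 p))) * deriv Φ β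
        + eval ![Φ β, β] (pderiv 0 p) * deriv (deriv Φ) β
        + (eval ![Φ β, β] (pderiv 0 (pderiv 1 p)) * deriv Φ β
          + eval ![Φ β, β] (pderiv 1 (pderiv 1 p)))) β :=
    (he0.mul hΦ2.hasDerivAt).add he1
  have hGd0 : HasDerivAt G 0 β :=
    (hasDerivAt_const β (0:ℝ)).congr_of_eventuallyEq
      (by filter_upwards [hG0] with z hz using hz)
  have key := hGd.unique hGd0
  rw [hΦβ, hΦ'β] at key
  have h1 : deriv (deriv Φ) β * eval ![α, β] (pderiv 0 p) =
      -(eval ![α, β] (pderiv 1 (pderiv 1 p))) := by linarith [key]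
  exact ⟨h1, by field_simp [hx] at h1 ⊢; linarith [h1]⟩
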